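/- Let α > 0 and 0 < β ≤ α/4, and define φ(x) = √(α/π) e^{-αx²}. Then for all real x and s, |e^{-β(x-s)²} - √(α/(α-β)) Σ_{k∈ℤ} e^{-(αβ/(α-β))(k-s)²} φ(x-k)| ≤ ε e^{-β(x-s)²}, where ε = θ₃(0, e^{-3π²/(4α)}) - 1. -/

import Mathlib

open Real

lemma summable_exp_neg_int_sq {t : ℝ} (ht : 0 < t) :
    Summable fun n : ℤ => Real.exp (-t * (n : ℝ)^2) := by
  have hgeo : Summable fun n : ℕ => Real.exp (-t) ^ n :=
    summable_geometric_of_lt_one (Real.exp_pos _).le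
      (Real.exp_lt_one_iff.mpr (by linarith))
  have habs : Summable fun n : ℤ => Real.exp (-t * |(n : ℝ)|) := by
    apply Summable.of_nat_of_neg <;>
      · simp only [Int.cast_natCast, Int.cast_neg, abs_neg, Nat.abs_cast]
        simpa [← Real.exp_nat_mul, mul_comm] using hgeo
  refine habs.of_nonneg_of_le (fun n => (Real.exp_pos _).le) (fun n => ?_)
  apply Real.exp_le_exp.mpr
  rcases eq_or_ne n 0 with rfl | hn
  · simp
  · have h1 : (1 : ℝ) ≤ |(n : ℝ)| := by
      have := Int.one_le_abs (by exact_mod_cast hn)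
      calc (1:ℝ) ≤ (|n| : ℤ) := by exact_mod_cast this
        _ = |(n:ℝ)| := by push_cast; rfl
    have : |(n:ℝ)| ≤ (n:ℝ)^2 := by
      rw [← sq_abs]; nlinarith
    nlinarith

lemma poisson_bound {A : ℝ} (hA : 0 < A) (c : ℝ) :
    |1 - Real.sqrt (A/π) * ∑' k : ℤ, Real.exp (-A*((k:ℝ)-c)^2)| ≤
      (∑' n : ℤ, Real.exp (-(π^2/A) * (n:ℝ)^2)) - 1 := by
  have hπ := Real.pi_pos
  set f : ℤ → ℂ := fun n => Complex.exp (-(π:ℂ) * ((π/A : ℝ) : ℂ) * (n:ℂ)^2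
    + 2*(π:ℂ)*(Complex.I*(c:ℂ))*(n:ℂ)) with hf
  have hnorm : ∀ n : ℤ, ‖f n‖ = Real.exp (-(π^2/A) * (n:ℝ)^2) := by
    intro n
    rw [hf]
    simp only [Complex.norm_exp]
    congr 1
    simp [pow_two, Complex.add_re, Complex.mul_re, Complex.mul_im, Complex.I_re, Complex.I_im,
      Complex.ofReal_re, Complex.ofReal_im]
    exact Or.inl (by ring)
  have hsumnorm : Summable fun n : ℤ => ‖f n‖ := by
    simpa only [hnorm] using summable_exp_neg_int_sq (t := π^2/A) (by positivity)
  have hsumf : Summable f := hsumnorm.of_norm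
  have hg : Summable fun n : ℤ => Real.exp (-(π^2/A) * (n:ℝ)^2) :=
    summable_exp_neg_int_sq (by positivity)
  have hre : (0:ℝ) < ((π/A : ℝ) : ℂ).re := by simpa using div_pos hπ hA
  have hpoisson := Complex.tsum_exp_neg_quadratic hre (Complex.I * (c:ℂ))
  have hinner : ∀ n : ℤ, Complex.exp (-(π:ℂ) / ((π/A : ℝ) : ℂ) * ((n:ℂ) + Complex.I*(Complex.I*(c:ℂ)))^2)
      = ((Real.exp (-A*((n:ℝ)-c)^2) : ℝ) : ℂ) := by
    intro n
    rw [Complex.ofReal_exp]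
    congr 1
    have h1 : -(π:ℂ) / ((π/A : ℝ) : ℂ) = -(A:ℂ) := by
      have : ((π:ℝ):ℂ) ≠ 0 := Complex.ofReal_ne_zero.mpr Real.pi_ne_zero
      push_cast
      field_simp
    have h2 : (n:ℂ) + Complex.I*(Complex.I*(c:ℂ)) = (n:ℂ) - (c:ℂ) := by
      rw [← mul_assoc, Complex.I_mul_I]; ring
    rw [h1, h2]
    push_cast
    ring
  have hsqrt : ((π/A : ℝ) : ℂ) ^ (1/2 : ℂ) = ((Real.sqrt (π/A) : ℝ) : ℂ) := by
    rw [show (1/2:ℂ) = ((1/2:ℝ):ℂ) by norm_num, ← Complex.ofReal_cpow (by positivity)]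
    norm_num [Real.sqrt_eq_rpow]
  have hsqrtne : ((Real.sqrt (π/A) : ℝ) : ℂ) ≠ 0 := by
    simp [Real.sqrt_eq_zero', not_le]
    positivity
  have hS : ((∑' k : ℤ, Real.exp (-A*((k:ℝ)-c)^2) : ℝ) : ℂ)
      = ((Real.sqrt (π/A) : ℝ) : ℂ) * ∑' n, f n := by
    rw [Complex.ofReal_tsum]
    rw [show (fun k : ℤ => ((Real.exp (-A*((k:ℝ)-c)^2) : ℝ) : ℂ)) = fun n : ℤ =>
      Complex.exp (-(π:ℂ) / ((π/A : ℝ) : ℂ) * ((n:ℂ) + Complex.I*(Complex.I*(c:ℂ)))^2) from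
      funext fun n => (hinner n).symm]
    rw [hpoisson, hsqrt, one_div, mul_inv_cancel_left₀ hsqrtne]
  have hone : ((Real.sqrt (A/π) : ℝ):ℂ) * ((Real.sqrt (π/A) : ℝ):ℂ) = 1 := by
    rw [← Complex.ofReal_mul, ← Real.sqrt_mul (by positivity)]
    rw [show (A/π) * (π/A) = 1 by field_simp]
    simp
  have key : (1:ℂ) - ((Real.sqrt (A/π) : ℝ):ℂ) * ((∑' k : ℤ, Real.exp (-A*((k:ℝ)-c)^2) : ℝ) : ℂ)
      = -(∑' n : ℤ, if n = 0 then 0 else f n) := by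
    rw [hS, ← mul_assoc, hone, one_mul]
    have hsplit := Summable.tsum_eq_add_tsum_ite hsumf 0
    have hf0 : f 0 = 1 := by simp [hf]
    rw [hsplit, hf0]
    ring
  have hite_norm : ∀ n : ℤ, ‖(if n = 0 then 0 else f n : ℂ)‖
      = if n = 0 then 0 else Real.exp (-(π^2/A) * (n:ℝ)^2) := by
    intro n
    split
    · simp
    · exact hnorm n
  have hsum_ite : Summable fun n : ℤ => ‖(if n = 0 then 0 else f n : ℂ)‖ := by
    refine hg.of_nonneg_of_le (fun n => norm_nonneg _) (fun n => ?_)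
    rw [hite_norm]
    split
    · positivity
    · exact le_rfl
  calc |1 - Real.sqrt (A/π) * ∑' k : ℤ, Real.exp (-A*((k:ℝ)-c)^2)|
      = ‖((1 - Real.sqrt (A/π) * ∑' k : ℤ, Real.exp (-A*((k:ℝ)-c)^2) : ℝ) : ℂ)‖ := by
        rw [Complex.norm_real, Real.norm_eq_abs]
    _ = ‖-(∑' n : ℤ, if n = 0 then 0 else f n)‖ := by
        rw [← key]; push_cast; ring_nf
    _ = ‖(∑' n : ℤ, if n = 0 then 0 else f n)‖ := norm_neg _
    _ ≤ ∑' n : ℤ, ‖(if n = 0 then 0 else f n : ℂ)‖ := norm_tsum_le_tsum_norm hsum_ite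
    _ = ∑' n : ℤ, (if n = 0 then 0 else Real.exp (-(π^2/A) * (n:ℝ)^2)) :=
        tsum_congr hite_norm
    _ = (∑' n : ℤ, Real.exp (-(π^2/A) * (n:ℝ)^2)) - 1 := by
        have hsplit := Summable.tsum_eq_add_tsum_ite hg 0
        simp only [Int.cast_zero] at hsplit
        rw [hsplit]
        simp


theorem gaussian_gmra_approximation (α β : ℝ) (hα : 0 < α) (hβ : 0 < β) (hβα : β ≤ α / 4)
    (x s : ℝ) :
    |Real.exp (-β * (x - s)^2) -
        Real.sqrt (α / (α - β)) *
          ∑' k : ℤ, Real.exp (-(α * β / (α - β)) * ((k : ℝ) - s)^2) *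
            (Real.sqrt (α / π) * Real.exp (-α * (x - (k : ℝ))^2))| ≤
      ((∑' n : ℤ, Real.exp (-(3 * π^2 / (4 * α)) * (n : ℝ)^2)) - 1) *
        Real.exp (-β * (x - s)^2) := by
  have hπ := Real.pi_pos
  have hαβ : 0 < α - β := by linarith
  set A : ℝ := α^2/(α-β) with hAdef
  set c : ℝ := ((α-β)*x + β*s)/α with hcdef
  have hA : 0 < A := by positivity
  set d : ℝ := Real.exp (-β * (x - s)^2) with hddef
  have hd : 0 < d := Real.exp_pos _
  have hterm : ∀ k : ℤ, Real.exp (-(α * β / (α - β)) * ((k : ℝ) - s)^2) *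
      (Real.sqrt (α / π) * Real.exp (-α * (x - (k : ℝ))^2))
      = (Real.sqrt (α/π) * d) * Real.exp (-A*((k:ℝ)-c)^2) := by
    intro k
    have hexp : -(α * β / (α - β)) * ((k:ℝ)-s)^2 + -α*(x-(k:ℝ))^2
        = -β*(x-s)^2 + -A*((k:ℝ)-c)^2 := by
      rw [hAdef, hcdef]
      field_simp
      ring
    calc Real.exp (-(α * β / (α - β)) * ((k : ℝ) - s)^2) *
          (Real.sqrt (α / π) * Real.exp (-α * (x - (k : ℝ))^2))
        = Real.sqrt (α/π) * Real.exp (-(α * β / (α - β)) * ((k:ℝ)-s)^2 + -α*(x-(k:ℝ))^2) := by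
          rw [Real.exp_add]; ring
      _ = Real.sqrt (α/π) * Real.exp (-β*(x-s)^2 + -A*((k:ℝ)-c)^2) := by rw [hexp]
      _ = (Real.sqrt (α/π) * d) * Real.exp (-A*((k:ℝ)-c)^2) := by
          rw [Real.exp_add, hddef]; ring
  have hsum : (∑' k : ℤ, Real.exp (-(α * β / (α - β)) * ((k : ℝ) - s)^2) *
      (Real.sqrt (α / π) * Real.exp (-α * (x - (k : ℝ))^2)))
      = (Real.sqrt (α/π) * d) * ∑' k : ℤ, Real.exp (-A*((k:ℝ)-c)^2) := by
    rw [← tsum_mul_left]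
    exact tsum_congr hterm
  have hfac : Real.sqrt (α/(α-β)) * Real.sqrt (α/π) = Real.sqrt (A/π) := by
    rw [← Real.sqrt_mul (by positivity)]
    congr 1
    rw [hAdef]
    field_simp
  have hrw : d - Real.sqrt (α / (α - β)) *
      ∑' k : ℤ, Real.exp (-(α * β / (α - β)) * ((k : ℝ) - s)^2) *
        (Real.sqrt (α / π) * Real.exp (-α * (x - (k : ℝ))^2))
      = d * (1 - Real.sqrt (A/π) * ∑' k : ℤ, Real.exp (-A*((k:ℝ)-c)^2)) := by
    rw [hsum, ← hfac]
    ring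
  rw [hrw, abs_mul, abs_of_pos hd, mul_comm ((∑' n : ℤ, Real.exp (-(3 * π^2 / (4 * α)) * (n : ℝ)^2)) - 1) d]
  refine mul_le_mul_of_nonneg_left ?_ hd.le
  refine (poisson_bound hA c).trans ?_
  refine sub_le_sub_right ?_ 1
  refine Summable.tsum_le_tsum (fun n => ?_) (summable_exp_neg_int_sq (by positivity))
    (summable_exp_neg_int_sq (by positivity))
  apply Real.exp_le_exp.mpr
  have hle : 3 * π^2 / (4 * α) ≤ π^2 / A := by
    have hAeq : π^2 / A = π^2 * (α-β) / α^2 := by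
      rw [hAdef]; field_simp
    have h4 : (0:ℝ) ≤ α - 4*β := by linarith
    rw [hAeq, div_le_div_iff₀ (by positivity) (by positivity)]
    nlinarith [mul_nonneg (mul_nonneg h4 hα.le) (sq_nonneg π)]
  nlinarith [sq_nonneg (n:ℝ), mul_le_mul_of_nonneg_right hle (sq_nonneg (n:ℝ))]
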